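/- Let {Y_z}_{z ∈ ℤ²} be positive weights and for u ≤ v define the partition function Z_{u,v} = Σ over up-right paths from u to v of the product of weights Y along the path. Let x, y, z ∈ ℤ² with x·e_1 ≤ y·e_1, x·e_2 ≥ y·e_2, and x ≤ z, y ≤ z (and z - e_1, z - e_2 admissible endpoints). Then Z_{x,z}/Z_{x,z-e_1} ≤ Z_{y,z}/Z_{y,z-e_1} and Z_{x,z}/Z_{x,z-e_2} ≥ Z_{y,z}/Z_{y,z-e_2}. -/
import Mathlib


/-- The `j`-th vertex of the up-right path started at `u` whose `i`-th step is
`e₁` if `σ i = true` and `e₂` if `σ i = false`. -/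
def pathVertex (u : ℤ × ℤ) (σ : ℕ → Bool) (j : ℕ) : ℤ × ℤ :=
  (u.1 + ((Finset.range j).filter fun i => σ i = true).card,
   u.2 + ((Finset.range j).filter fun i => σ i = false).card)

/-- The polymer partition function `Z_{u,v}`: the sum over all up-right paths from `u`
to `v` of the product of the weights `Y` along the path (including both endpoints);
`Z_{u,v} = 0` if `u ≤ v` fails. -/
noncomputable def Zfun (Y : ℤ × ℤ → ℝ) (u v : ℤ × ℤ) : ℝ :=
  if u.1 ≤ v.1 ∧ u.2 ≤ v.2 then
    ∑ σ : Fin ((v.1 - u.1).toNat + (v.2 - u.2).toNat) → Bool,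
      (if (Finset.univ.filter fun i => σ i = true).card = (v.1 - u.1).toNat then
        ∏ j ∈ Finset.range ((v.1 - u.1).toNat + (v.2 - u.2).toNat + 1),
          Y (pathVertex u
              (fun i => if h : i < (v.1 - u.1).toNat + (v.2 - u.2).toNat then σ ⟨i, h⟩
                        else false) j)
      else 0)
  else 0

lemma pathVertex_congr (u : ℤ × ℤ) (σ σ' : ℕ → Bool) (j : ℕ)
    (h : ∀ i < j, σ i = σ' i) : pathVertex u σ j = pathVertex u σ' j := by
  unfold pathVertex
  have : ∀ b : Bool, Finset.filter (fun i => σ i = b) (Finset.range j)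
      = Finset.filter (fun i => σ' i = b) (Finset.range j) := by
    intro b
    apply Finset.filter_congr
    intro i hi
    simp only [Finset.mem_range] at hi
    rw [h i hi]
  simp [this]

lemma Zfun_eq (Y : ℤ × ℤ → ℝ) (u v : ℤ × ℤ) (h : u.1 ≤ v.1 ∧ u.2 ≤ v.2) (m n N : ℕ)
    (hm : (v.1 - u.1).toNat = m) (hn : (v.2 - u.2).toNat = n) (hN : m + n = N) :
    Zfun Y u v = ∑ σ : Fin N → Bool,
      (if (Finset.univ.filter fun i => σ i = true).card = m then
        ∏ j ∈ Finset.range (N + 1),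
          Y (pathVertex u (fun i => if h : i < N then σ ⟨i, h⟩ else false) j)
      else 0) := by
  subst hm hn hN; rw [Zfun, if_pos h]

lemma Zfun_nonneg (Y : ℤ × ℤ → ℝ) (hY : ∀ z, 0 < Y z) (u v : ℤ × ℤ) :
    0 ≤ Zfun Y u v := by
  rw [Zfun]
  split
  · apply Finset.sum_nonneg
    intro σ _
    split
    · exact Finset.prod_nonneg fun j _ => (hY _).le
    · exact le_rfl
  · exact le_rfl

lemma card_filter_ext (N : ℕ) (σ : Fin N → Bool) (b : Bool) :
    ((Finset.range N).filter fun i => (if h : i < N then σ ⟨i, h⟩ else false) = b).card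
      = (Finset.univ.filter fun i => σ i = b).card := by
  rw [Finset.card_filter, Finset.card_filter,
    ← Fin.sum_univ_eq_sum_range (fun i => if (if h : i < N then σ ⟨i, h⟩ else false) = b then 1 else 0) N]
  apply Finset.sum_congr rfl
  intro i _
  simp [i.isLt]

lemma pathVertex_ext_top (u : ℤ × ℤ) (N : ℕ) (σ : Fin N → Bool) :
    pathVertex u (fun i => if h : i < N then σ ⟨i, h⟩ else false) N
      = (u.1 + (Finset.univ.filter fun i => σ i = true).card,
         u.2 + (Finset.univ.filter fun i => σ i = false).card) := by
  unfold pathVertex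
  rw [card_filter_ext, card_filter_ext]

lemma card_true_add_card_false (N : ℕ) (σ : Fin N → Bool) :
    (Finset.univ.filter fun i => σ i = true).card
      + (Finset.univ.filter fun i => σ i = false).card = N := by
  have h := Finset.card_filter_add_card_filter_not (s := (Finset.univ : Finset (Fin N)))
    (p := fun i => σ i = true)
  simp only [Bool.not_eq_true] at h
  simpa using h

lemma card_filter_snoc (k : ℕ) (τ : Fin k → Bool) (b c : Bool) :
    (Finset.univ.filter fun i : Fin (k+1) => (Fin.snoc τ b : Fin (k+1) → Bool) i = c).card
      = (Finset.univ.filter fun i : Fin k => τ i = c).card + (if b = c then 1 else 0) := by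
  rw [Finset.card_filter, Finset.card_filter, Fin.sum_univ_castSucc]
  simp [Fin.snoc_castSucc, Fin.snoc_last]

lemma Zfun_rec (Y : ℤ × ℤ → ℝ) (u v : ℤ × ℤ) (h1 : u.1 ≤ v.1) (h2 : u.2 ≤ v.2)
    (hne : u ≠ v) :
    Zfun Y u v = (Zfun Y u (v - (1, 0)) + Zfun Y u (v - (0, 1))) * Y v := by
  obtain ⟨m, hm⟩ : ∃ m : ℕ, v.1 - u.1 = (m : ℤ) :=
    ⟨(v.1 - u.1).toNat, by rw [Int.toNat_of_nonneg (by omega)]⟩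
  obtain ⟨n, hn⟩ : ∃ n : ℕ, v.2 - u.2 = (n : ℤ) :=
    ⟨(v.2 - u.2).toNat, by rw [Int.toNat_of_nonneg (by omega)]⟩
  have hmt : (v.1 - u.1).toNat = m := by omega
  have hnt : (v.2 - u.2).toNat = n := by omega
  have hmn : m + n ≠ 0 := by
    intro h0
    apply hne
    have : u.1 = v.1 ∧ u.2 = v.2 := by omega
    exact Prod.ext this.1 this.2
  obtain ⟨k, hk⟩ : ∃ k, m + n = k + 1 := ⟨m + n - 1, by omega⟩
  rw [Zfun_eq Y u v ⟨h1, h2⟩ m n (k+1) hmt hnt hk]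
  -- reindex the sum by (b, τ) ↦ Fin.snoc τ b
  rw [← Equiv.sum_comp (Fin.snocEquiv (fun _ : Fin (k+1) => Bool))
    (fun σ => if (Finset.univ.filter fun i => σ i = true).card = m then
        ∏ j ∈ Finset.range (k + 1 + 1),
          Y (pathVertex u (fun i => if h : i < k + 1 then σ ⟨i, h⟩ else false) j)
      else 0)]
  rw [Fintype.sum_prod_type]
  rw [Fintype.sum_bool]
  have hterm : ∀ (b : Bool) (τ : Fin k → Bool),
      (if (Finset.univ.filter fun i =>
            (Fin.snocEquiv (fun _ : Fin (k+1) => Bool) (b, τ)) i = true).card = m then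
        ∏ j ∈ Finset.range (k + 1 + 1),
          Y (pathVertex u (fun i => if h : i < k + 1 then
              (Fin.snocEquiv (fun _ : Fin (k+1) => Bool) (b, τ)) ⟨i, h⟩ else false) j)
      else 0)
      = (if (Finset.univ.filter fun i => τ i = true).card + (if b = true then 1 else 0) = m
          then (∏ j ∈ Finset.range (k + 1),
            Y (pathVertex u (fun i => if h : i < k then τ ⟨i, h⟩ else false) j)) * Y v
          else 0) := by
    intro b τ
    have hsnoc : (Fin.snocEquiv (fun _ : Fin (k+1) => Bool) (b, τ))
        = (Fin.snoc τ b : Fin (k+1) → Bool) := rfl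
    rw [hsnoc, card_filter_snoc]
    by_cases hC : (Finset.univ.filter fun i => τ i = true).card + (if b = true then 1 else 0) = m
    · rw [if_pos hC, if_pos hC, Finset.prod_range_succ]
      congr 1
      · apply Finset.prod_congr rfl
        intro j hj
        rw [Finset.mem_range] at hj
        congr 1
        apply pathVertex_congr
        intro i hi
        have hik : i < k := by omega
        rw [dif_pos (by omega : i < k + 1), dif_pos hik]
        have hcast : (⟨i, by omega⟩ : Fin (k+1)) = Fin.castSucc ⟨i, hik⟩ := rfl
        rw [hcast, Fin.snoc_castSucc]
      · congr 1
        rw [pathVertex_ext_top]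
        have htot := card_true_add_card_false (k+1) (Fin.snoc τ b : Fin (k+1) → Bool)
        rw [card_filter_snoc] at htot
        have hct : (Finset.univ.filter fun i =>
            (Fin.snoc τ b : Fin (k+1) → Bool) i = true).card = m := by
          rw [card_filter_snoc]; exact hC
        have hcf : (Finset.univ.filter fun i =>
            (Fin.snoc τ b : Fin (k+1) → Bool) i = false).card = n := by omega
        rw [hct, hcf]
        exact Prod.ext (by omega) (by omega)
    · rw [if_neg hC, if_neg hC]
  simp only [hterm]
  have hT : ∑ τ : Fin k → Bool,
      (if (Finset.univ.filter fun i => τ i = true).card + 1 = m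
        then (∏ j ∈ Finset.range (k + 1),
          Y (pathVertex u (fun i => if h : i < k then τ ⟨i, h⟩ else false) j)) * Y v
        else 0) = Zfun Y u (v - (1, 0)) * Y v := by
    match m, hm with
    | 0, hm =>
      rw [Zfun, if_neg (by
        simp only [Prod.fst_sub, Prod.snd_sub]
        intro hcon
        omega)]
      rw [zero_mul]
      apply Finset.sum_eq_zero
      intro τ _
      rw [if_neg (by omega)]
    | (m' + 1), hm =>
      rw [Zfun_eq Y u (v - (1, 0)) (by constructor <;> simp only [Prod.fst_sub, Prod.snd_sub] <;> omega)
        m' n k (by simp only [Prod.fst_sub, Prod.snd_sub]; omega)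
        (by simp only [Prod.fst_sub, Prod.snd_sub]; omega) (by omega)]
      rw [Finset.sum_mul]
      apply Finset.sum_congr rfl
      intro τ _
      rw [ite_mul, zero_mul]
      apply if_congr _ rfl rfl
      omega
  have hF : ∑ τ : Fin k → Bool,
      (if (Finset.univ.filter fun i => τ i = true).card = m
        then (∏ j ∈ Finset.range (k + 1),
          Y (pathVertex u (fun i => if h : i < k then τ ⟨i, h⟩ else false) j)) * Y v
        else 0) = Zfun Y u (v - (0, 1)) * Y v := by
    match n, hn with
    | 0, hn =>
      rw [Zfun, if_neg (by
        simp only [Prod.fst_sub, Prod.snd_sub]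
        intro hcon
        omega)]
      rw [zero_mul]
      apply Finset.sum_eq_zero
      intro τ _
      rw [if_neg ?_]
      intro hcon
      have hle := Finset.card_filter_le (Finset.univ : Finset (Fin k)) (fun i => τ i = true)
      simp only [Finset.card_univ, Fintype.card_fin] at hle
      omega
    | (n' + 1), hn =>
      rw [Zfun_eq Y u (v - (0, 1)) (by constructor <;> simp only [Prod.fst_sub, Prod.snd_sub] <;> omega)
        m n' k (by simp only [Prod.fst_sub, Prod.snd_sub]; omega)
        (by simp only [Prod.fst_sub, Prod.snd_sub]; omega) (by omega)]
      rw [Finset.sum_mul]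
      apply Finset.sum_congr rfl
      intro τ _
      rw [ite_mul, zero_mul]
  simp only [reduceIte, Bool.false_eq_true, if_false, Nat.add_zero] at hT hF ⊢
  rw [hT, hF]
  ring

lemma fst_sub10 (p : ℤ × ℤ) : (p - (1, 0)).1 = p.1 - 1 := rfl
lemma snd_sub10 (p : ℤ × ℤ) : (p - (1, 0)).2 = p.2 := sub_zero p.2
lemma fst_sub01 (p : ℤ × ℤ) : (p - (0, 1)).1 = p.1 := sub_zero p.1
lemma snd_sub01 (p : ℤ × ℤ) : (p - (0, 1)).2 = p.2 - 1 := rfl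

lemma Zfun_self (Y : ℤ × ℤ → ℝ) (u : ℤ × ℤ) : Zfun Y u u = Y u := by
  rw [Zfun_eq Y u u ⟨le_rfl, le_rfl⟩ 0 0 0 (by omega) (by omega) rfl]
  simp [pathVertex]

lemma Zfun_pos (Y : ℤ × ℤ → ℝ) (hY : ∀ z, 0 < Y z) :
    ∀ (K : ℕ) (u v : ℤ × ℤ), u.1 ≤ v.1 → u.2 ≤ v.2 →
      (v.1 - u.1 + (v.2 - u.2)).toNat ≤ K → 0 < Zfun Y u v := by
  intro K
  induction K with
  | zero =>
    intro u v h1 h2 hK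
    have huv : u = v := Prod.ext (by omega) (by omega)
    rw [huv, Zfun_self]
    exact hY v
  | succ K ih =>
    intro u v h1 h2 hK
    by_cases huv : u = v
    · rw [huv, Zfun_self]; exact hY v
    · rw [Zfun_rec Y u v h1 h2 huv]
      apply mul_pos _ (hY v)
      by_cases hm : u.1 < v.1
      · have hp := ih u (v - (1, 0)) (by rw [fst_sub10]; omega) (by rw [snd_sub10]; omega)
          (by rw [fst_sub10, snd_sub10]; omega)
        have hq := Zfun_nonneg Y hY u (v - (0, 1))
        linarith
      · have hn : u.2 < v.2 := by
          rcases Prod.ext_iff.not.mp huv with h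
          omega
        have hp := ih u (v - (0, 1)) (by rw [fst_sub01]; omega) (by rw [snd_sub01]; omega)
          (by rw [fst_sub01, snd_sub01]; omega)
        have hq := Zfun_nonneg Y hY u (v - (1, 0))
        linarith

lemma Zfun_cross (Y : ℤ × ℤ → ℝ) (hY : ∀ z, 0 < Y z) (x y : ℤ × ℤ)
    (hxy1 : x.1 ≤ y.1) (hxy2 : y.2 ≤ x.2) :
    ∀ (K : ℕ) (a b : ℤ × ℤ), b.1 ≤ a.1 → a.2 ≤ b.2 →
      (a.1 + a.2 + b.1 + b.2 - (x.1 + x.2 + y.1 + y.2)).toNat ≤ K →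
      Zfun Y x a * Zfun Y y b ≤ Zfun Y x b * Zfun Y y a := by
  intro K
  induction K with
  | zero =>
    intro a b hba hab hK
    by_cases hxa : x.1 ≤ a.1 ∧ x.2 ≤ a.2
    · by_cases hyb : y.1 ≤ b.1 ∧ y.2 ≤ b.2
      · obtain ⟨hxa1, hxa2⟩ := hxa
        obtain ⟨hyb1, hyb2⟩ := hyb
        have hax : a = x := Prod.ext (by omega) (by omega)
        have hby : b = y := Prod.ext (by omega) (by omega)
        have hxy : x = y := Prod.ext (by omega) (by omega)
        rw [hax, hby, hxy]
      · have h0 : Zfun Y y b = 0 := by rw [Zfun, if_neg hyb]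
        rw [h0, mul_zero]
        exact mul_nonneg (Zfun_nonneg Y hY x b) (Zfun_nonneg Y hY y a)
    · have h0 : Zfun Y x a = 0 := by rw [Zfun, if_neg hxa]
      rw [h0, zero_mul]
      exact mul_nonneg (Zfun_nonneg Y hY x b) (Zfun_nonneg Y hY y a)
  | succ K ih =>
    intro a b hba hab hK
    by_cases hxa : x.1 ≤ a.1 ∧ x.2 ≤ a.2
    · by_cases hyb : y.1 ≤ b.1 ∧ y.2 ≤ b.2
      · obtain ⟨hxa1, hxa2⟩ := hxa
        obtain ⟨hyb1, hyb2⟩ := hyb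
        rcases eq_or_lt_of_le hba with heq | hlt
        · rcases eq_or_lt_of_le hab with heq2 | hlt2
          · have hab' : a = b := Prod.ext heq.symm heq2
            rw [hab']
          · -- expand at b
            have hbx : x ≠ b := by intro h; rw [h] at hxa2; omega
            have hby : y ≠ b := by intro h; rw [h] at hxy2; omega
            rw [Zfun_rec Y x b (by omega) (by omega) hbx,
              Zfun_rec Y y b (by omega) (by omega) hby]
            have i1 := ih a (b - (1, 0)) (by rw [fst_sub10]; omega)
              (by rw [snd_sub10]; omega) (by rw [fst_sub10, snd_sub10]; omega)
            have i2 := ih a (b - (0, 1)) (by rw [fst_sub01]; omega)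
              (by rw [snd_sub01]; omega) (by rw [fst_sub01, snd_sub01]; omega)
            have key := mul_le_mul_of_nonneg_right (add_le_add i1 i2) (hY b).le
            nlinarith [key]
        · -- expand at a
          have hax : x ≠ a := by intro h; rw [h] at hxy1; omega
          have hay : y ≠ a := by intro h; rw [h] at hyb1; omega
          rw [Zfun_rec Y x a (by omega) (by omega) hax,
            Zfun_rec Y y a (by omega) (by omega) hay]
          have i1 := ih (a - (1, 0)) b (by rw [fst_sub10]; omega)
            (by rw [snd_sub10]; omega) (by rw [fst_sub10, snd_sub10]; omega)
          have i2 := ih (a - (0, 1)) b (by rw [fst_sub01]; omega)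
            (by rw [snd_sub01]; omega) (by rw [fst_sub01, snd_sub01]; omega)
          have key := mul_le_mul_of_nonneg_right (add_le_add i1 i2) (hY a).le
          nlinarith [key]
      · have h0 : Zfun Y y b = 0 := by rw [Zfun, if_neg hyb]
        rw [h0, mul_zero]
        exact mul_nonneg (Zfun_nonneg Y hY x b) (Zfun_nonneg Y hY y a)
    · have h0 : Zfun Y x a = 0 := by rw [Zfun, if_neg hxa]
      rw [h0, zero_mul]
      exact mul_nonneg (Zfun_nonneg Y hY x b) (Zfun_nonneg Y hY y a)

/-- Monotonicity of ratios of polymer partition functions in the starting point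
along a down-right direction. -/
theorem stmt4 (Y : ℤ × ℤ → ℝ) (hY : ∀ z, 0 < Y z) (x y z : ℤ × ℤ)
    (h1 : x.1 ≤ y.1) (h2 : y.2 ≤ x.2)
    (hx1 : x.1 ≤ z.1 - 1) (hx2 : x.2 ≤ z.2 - 1)
    (hy1 : y.1 ≤ z.1 - 1) (hy2 : y.2 ≤ z.2 - 1) :
    Zfun Y x z / Zfun Y x (z - (1, 0)) ≤ Zfun Y y z / Zfun Y y (z - (1, 0)) ∧
    Zfun Y y z / Zfun Y y (z - (0, 1)) ≤ Zfun Y x z / Zfun Y x (z - (0, 1)) := by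
  have hzx : x ≠ z := by intro h; rw [h] at hx1; omega
  have hzy : y ≠ z := by intro h; rw [h] at hy1; omega
  have recx := Zfun_rec Y x z (by omega) (by omega) hzx
  have recy := Zfun_rec Y y z (by omega) (by omega) hzy
  have cross := Zfun_cross Y hY x y h1 h2
    ((z - (0, 1)).1 + (z - (0, 1)).2 + (z - (1, 0)).1 + (z - (1, 0)).2
      - (x.1 + x.2 + y.1 + y.2)).toNat
    (z - (0, 1)) (z - (1, 0))
    (by rw [fst_sub10, fst_sub01]; omega)
    (by rw [snd_sub10, snd_sub01]; omega) le_rfl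
  have pxB := Zfun_pos Y hY _ x (z - (1, 0)) (by rw [fst_sub10]; omega)
    (by rw [snd_sub10]; omega) le_rfl
  have pxA := Zfun_pos Y hY _ x (z - (0, 1)) (by rw [fst_sub01]; omega)
    (by rw [snd_sub01]; omega) le_rfl
  have pyB := Zfun_pos Y hY _ y (z - (1, 0)) (by rw [fst_sub10]; omega)
    (by rw [snd_sub10]; omega) le_rfl
  have pyA := Zfun_pos Y hY _ y (z - (0, 1)) (by rw [fst_sub01]; omega)
    (by rw [snd_sub01]; omega) le_rfl
  have key := mul_le_mul_of_nonneg_left cross (hY z).le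
  constructor
  · rw [div_le_div_iff₀ pxB pyB, recx, recy]
    nlinarith [key]
  · rw [div_le_div_iff₀ pyA pxA, recx, recy]
    nlinarith [key]
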